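/- Every stable real n×n matrix A is similar to a matrix of the form J − R with J skew-symmetric and R symmetric positive-definite. -/

import Mathlib

open Matrix Filter
open scoped ComplexOrder MatrixOrder

section LyapunovCore

attribute [local instance] Matrix.frobeniusNormedAddCommGroup Matrix.frobeniusNormedRing
  Matrix.frobeniusNormedAlgebra Matrix.frobeniusNormedSpace Matrix.frobenius_normedStarGroup

/-- Möbius scalar estimate for the Cayley transform. -/
lemma cayley_abs_lt_one {μ c : ℂ} (hc : c.re < 0) (h : μ * (1 - c) = 1 + c) : ‖μ‖ < 1 := by
  have h1 : (1 - c) ≠ 0 := by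
    intro h0
    have := congrArg Complex.re h0
    simp [Complex.sub_re] at this
    linarith
  have e1 : ‖(1:ℂ) + c‖ ^ 2 = (1 + c.re) ^ 2 + c.im ^ 2 := by
    rw [Complex.sq_norm, Complex.normSq_apply]
    simp [Complex.add_re, Complex.add_im]
    ring
  have e2 : ‖(1:ℂ) - c‖ ^ 2 = (1 - c.re) ^ 2 + c.im ^ 2 := by
    rw [Complex.sq_norm, Complex.normSq_apply]
    simp [Complex.sub_re, Complex.sub_im]
    ring
  have hlt : ‖(1:ℂ) + c‖ ^ 2 < ‖(1:ℂ) - c‖ ^ 2 := by rw [e1, e2]; nlinarith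
  have hlt2 : ‖(1:ℂ) + c‖ < ‖(1:ℂ) - c‖ := by
    nlinarith [norm_nonneg ((1:ℂ) + c), norm_nonneg ((1:ℂ) - c)]
  have h3 : ‖μ‖ * ‖(1:ℂ) - c‖ = ‖(1:ℂ) + c‖ := by rw [← norm_mul, h]
  have h4 : 0 < ‖(1:ℂ) - c‖ := norm_pos_iff.mpr h1
  nlinarith [norm_nonneg μ]

/-- The core complex Lyapunov construction via the Cayley transform. -/
lemma exists_lyapunov {n : ℕ} (B : Matrix (Fin n) (Fin n) ℂ)
    (hB : ∀ μ ∈ spectrum ℂ B, μ.re < 0) :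
    ∃ P : Matrix (Fin n) (Fin n) ℂ,
      Pᴴ = P ∧ (∀ x : Fin n → ℂ, x ≠ 0 → 0 < (star x ⬝ᵥ P *ᵥ x).re) ∧
      (Bᴴ * P + P * B) + (Bᴴ * P + P * B) = -((1 - B)ᴴ * (1 - B)) := by
  classical
  -- 1 - B is invertible
  have hB1 : IsUnit (1 - B) := by
    by_contra hc
    have h1 : (1:ℂ) ∈ spectrum ℂ B := by
      rw [spectrum.mem_iff, Algebra.algebraMap_eq_smul_one, one_smul]
      exact hc
    have := hB 1 h1
    norm_num at this
  have hdet : IsUnit (1 - B).det := (Matrix.isUnit_iff_isUnit_det _).mp hB1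
  set W : Matrix (Fin n) (Fin n) ℂ := (1 + B) * (1 - B)⁻¹ with hWdef
  have hW1 : W * (1 - B) = 1 + B := by
    rw [hWdef, mul_assoc, Matrix.nonsing_inv_mul _ hdet, mul_one]
  -- spectrum of W lies in the open unit disc
  have hsmul_unit : ∀ (a : ℂ) (X : Matrix (Fin n) (Fin n) ℂ), a ≠ 0 →
      (IsUnit (a • X) ↔ IsUnit X) := by
    intro a X ha
    rw [Matrix.isUnit_iff_isUnit_det, Matrix.isUnit_iff_isUnit_det, Matrix.det_smul,
      isUnit_iff_ne_zero, isUnit_iff_ne_zero, mul_ne_zero_iff]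
    simp [pow_ne_zero _ ha]
  have hspecW : ∀ μ ∈ spectrum ℂ W, ‖μ‖ < 1 := by
    intro μ hμ
    rw [spectrum.mem_iff] at hμ
    have hnu : ¬ IsUnit ((algebraMap ℂ (Matrix (Fin n) (Fin n) ℂ)) μ - W) := hμ
    have hnu2 : ¬ IsUnit (((algebraMap ℂ (Matrix (Fin n) (Fin n) ℂ)) μ - W) * (1 - B)) := by
      intro hu
      apply hnu
      rw [Matrix.isUnit_iff_isUnit_det] at hu ⊢
      rw [Matrix.det_mul] at hu
      exact isUnit_of_mul_isUnit_left hu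
    have hcomp : ((algebraMap ℂ (Matrix (Fin n) (Fin n) ℂ)) μ - W) * (1 - B)
        = (μ - 1) • (1 : Matrix (Fin n) (Fin n) ℂ) - (μ + 1) • B := by
      rw [Algebra.algebraMap_eq_smul_one, sub_mul, smul_mul_assoc, one_mul, hW1]
      module
    rw [hcomp] at hnu2
    have hμ1 : μ ≠ -1 := by
      rintro rfl
      apply hnu2
      have : ((-1:ℂ) - 1) • (1 : Matrix (Fin n) (Fin n) ℂ) - ((-1:ℂ) + 1) • B
          = (-2 : ℂ) • (1 : Matrix (Fin n) (Fin n) ℂ) := by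
        rw [show ((-1:ℂ) - 1) = (-2:ℂ) by norm_num, show ((-1:ℂ) + 1) = (0:ℂ) by norm_num,
          zero_smul, sub_zero]
      rw [this, hsmul_unit _ _ (by norm_num)]
      exact isUnit_one
    have hμ1' : μ + 1 ≠ 0 := fun h0 => hμ1 (by linear_combination h0)
    set c : ℂ := (μ - 1) / (μ + 1) with hcdef
    have hc1 : (μ - 1) • (1 : Matrix (Fin n) (Fin n) ℂ) - (μ + 1) • B
        = (μ + 1) • (c • (1 : Matrix (Fin n) (Fin n) ℂ) - B) := by
      rw [smul_sub, smul_smul, mul_div_cancel₀ _ hμ1']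
    rw [hc1, hsmul_unit _ _ hμ1'] at hnu2
    have hcs : c ∈ spectrum ℂ B := by
      rw [spectrum.mem_iff, Algebra.algebraMap_eq_smul_one]
      exact hnu2
    have hcre := hB c hcs
    apply cayley_abs_lt_one hcre
    rw [hcdef]
    field_simp
    ring
  -- spectral radius < 1
  have hρ : spectralRadius ℂ W < 1 := by
    rcases (spectrum ℂ W).eq_empty_or_nonempty with he | hne
    · rw [spectralRadius, he]
      simp
    · obtain ⟨μ₀, hμ₀, hmax⟩ := (spectrum.isCompact W).exists_isMaxOn hne
        continuous_norm.continuousOn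
      have hμ₀1 : (‖μ₀‖₊ : ENNReal) < 1 := by
        rw [show (1 : ENNReal) = ((1 : NNReal) : ENNReal) from rfl, ENNReal.coe_lt_coe]
        exact_mod_cast hspecW μ₀ hμ₀
      calc spectralRadius ℂ W ≤ (‖μ₀‖₊ : ENNReal) := by
            rw [spectralRadius]
            exact iSup₂_le fun μ hμ => by exact_mod_cast hmax hμ
        _ < 1 := hμ₀1
  -- geometric decay of powers
  obtain ⟨r, hr1, hr2⟩ := ENNReal.lt_iff_exists_nnreal_btwn.mp hρ
  have hrlt1 : (r : ℝ) < 1 := by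
    have : (r : NNReal) < 1 := by exact_mod_cast hr2
    exact_mod_cast this
  have hr0 : (0:ℝ) ≤ (r:ℝ) := r.coe_nonneg
  have hgel := spectrum.pow_nnnorm_pow_one_div_tendsto_nhds_spectralRadius W
  have hev := hgel.eventually_lt_const hr1
  have hdecay : ∀ᶠ k in atTop, ‖W ^ k‖ ≤ (r:ℝ) ^ k := by
    filter_upwards [hev, eventually_ge_atTop 1] with k hk hk1
    have hk0 : (k:ℝ) ≠ 0 := by positivity
    have h2 := ENNReal.rpow_le_rpow hk.le (by positivity : (0:ℝ) ≤ (k:ℝ))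
    rw [← ENNReal.rpow_mul, one_div, inv_mul_cancel₀ hk0, ENNReal.rpow_one,
      ENNReal.rpow_natCast] at h2
    rw [← ENNReal.coe_pow, ENNReal.coe_le_coe] at h2
    calc ‖W ^ k‖ = ((‖W ^ k‖₊ : NNReal) : ℝ) := rfl
      _ ≤ (((r ^ k : NNReal)) : ℝ) := by exact_mod_cast h2
      _ = (r:ℝ) ^ k := by push_cast; ring
  -- the Lyapunov series
  set S : ℕ → Matrix (Fin n) (Fin n) ℂ := fun k => ((W ^ k)ᴴ) * (W ^ k) with hSdef
  have hSbound : ∀ k, ‖S k‖ ≤ ‖W ^ k‖ * ‖W ^ k‖ := by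
    intro k
    calc ‖S k‖ ≤ ‖(W ^ k)ᴴ‖ * ‖W ^ k‖ := Matrix.frobenius_norm_mul _ _
      _ = ‖W ^ k‖ * ‖W ^ k‖ := by rw [Matrix.frobenius_norm_conjTranspose]
  have hS : Summable S := by
    apply Summable.of_norm_bounded_eventually_nat (g := fun k => ((r:ℝ) ^ 2) ^ k)
    · exact summable_geometric_of_lt_one (by positivity) (by nlinarith)
    · filter_upwards [hdecay] with k hk
      calc ‖S k‖ ≤ ‖W ^ k‖ * ‖W ^ k‖ := hSbound k
        _ ≤ (r:ℝ) ^ k * (r:ℝ) ^ k := by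
            exact mul_le_mul hk hk (norm_nonneg _) (by positivity)
        _ = ((r:ℝ) ^ 2) ^ k := by ring
  set P : Matrix (Fin n) (Fin n) ℂ := ∑' k, S k with hPdef
  -- the shift identity
  have hSsucc : ∀ k, S (k + 1) = Wᴴ * S k * W := by
    intro k
    rw [hSdef]
    simp only [pow_succ, Matrix.conjTranspose_mul]
    noncomm_ring
  have hmapL : Wᴴ * P * W = ∑' k, Wᴴ * S k * W := by
    have h := (((LinearMap.mulLeft ℂ Wᴴ).comp
      (LinearMap.mulRight ℂ W)).toContinuousLinearMap).map_tsum hS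
    simpa [LinearMap.mulLeft_apply, LinearMap.mulRight_apply, mul_assoc] using h
  have hshift : Wᴴ * P * W = P - 1 := by
    rw [hmapL]
    have h1 : ∑' k, Wᴴ * S k * W = ∑' k, S (k + 1) := by
      exact tsum_congr fun k => (hSsucc k).symm
    have h2 : P = S 0 + ∑' k, S (k + 1) := hS.tsum_eq_zero_add
    have h0 : S 0 = 1 := by simp [hSdef]
    rw [h1, eq_sub_iff_add_eq, add_comm, ← h0, ← h2]
  -- Hermitian
  have hPh : Pᴴ = P := by
    rw [← Matrix.star_eq_conjTranspose, hPdef, tsum_star]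
    refine tsum_congr fun k => ?_
    rw [Matrix.star_eq_conjTranspose, hSdef]
    simp [Matrix.conjTranspose_mul]
  -- positivity
  have hpos : ∀ x : Fin n → ℂ, x ≠ 0 → 0 < (star x ⬝ᵥ P *ᵥ x).re := by
    intro v hv
    let φ : Matrix (Fin n) (Fin n) ℂ →ₗ[ℂ] ℂ :=
      { toFun := fun M => star v ⬝ᵥ M *ᵥ v
        map_add' := fun M N => by simp [Matrix.add_mulVec, dotProduct_add]
        map_smul' := fun c M => by simp [Matrix.smul_mulVec, dotProduct_smul] }
    have hq : star v ⬝ᵥ P *ᵥ v = ∑' k, star v ⬝ᵥ S k *ᵥ v := by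
      have h := φ.toContinuousLinearMap.map_tsum hS
      simpa [φ] using h
    have hqs : Summable (fun k => star v ⬝ᵥ S k *ᵥ v) := by
      have := hS.map φ.toContinuousLinearMap.toLinearMap.toAddMonoidHom
        φ.toContinuousLinearMap.continuous
      simpa [φ, Function.comp_def] using this
    have hres : Summable (fun k => (star v ⬝ᵥ S k *ᵥ v).re) := by
      have := hqs.map Complex.reCLM.toLinearMap.toAddMonoidHom Complex.reCLM.continuous
      simpa [Function.comp_def] using this
    have hre : (star v ⬝ᵥ P *ᵥ v).re = ∑' k, (star v ⬝ᵥ S k *ᵥ v).re := by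
      rw [hq]
      exact Complex.reCLM.map_tsum hqs
    have hterm_nonneg : ∀ k, 0 ≤ (star v ⬝ᵥ S k *ᵥ v).re := by
      intro k
      have := (Matrix.posSemidef_conjTranspose_mul_self (W ^ k)).re_dotProduct_nonneg v
      simpa [hSdef] using this
    have hterm0 : 0 < (star v ⬝ᵥ S 0 *ᵥ v).re := by
      have h0 : S 0 = 1 := by simp [hSdef]
      rw [h0]
      obtain ⟨i, hi⟩ := Function.ne_iff.mp hv
      have : (star v ⬝ᵥ (1 : Matrix (Fin n) (Fin n) ℂ) *ᵥ v).re
          = ∑ i, Complex.normSq (v i) := by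
        simp only [Matrix.one_mulVec, dotProduct, Pi.star_apply, Complex.re_sum]
        refine Finset.sum_congr rfl fun i _ => ?_
        rw [RCLike.star_def, mul_comm, Complex.mul_conj]
        simp
      rw [this]
      exact Finset.sum_pos' (fun i _ => Complex.normSq_nonneg _)
        ⟨i, Finset.mem_univ i, Complex.normSq_pos.mpr (by simpa using hi)⟩
    rw [hre]
    calc (0:ℝ) < (star v ⬝ᵥ S 0 *ᵥ v).re := hterm0
      _ ≤ ∑' k, (star v ⬝ᵥ S k *ᵥ v).re := hres.le_tsum 0 fun k _ => hterm_nonneg k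
  -- key identity
  have hkey : (Bᴴ * P + P * B) + (Bᴴ * P + P * B) = -((1 - B)ᴴ * (1 - B)) := by
    have e1 : (1 + B)ᴴ * P * (1 + B) = (1 - B)ᴴ * (P - 1) * (1 - B) := by
      calc (1 + B)ᴴ * P * (1 + B) = (W * (1 - B))ᴴ * P * (W * (1 - B)) := by rw [hW1]
        _ = (1 - B)ᴴ * (Wᴴ * P * W) * (1 - B) := by
            rw [Matrix.conjTranspose_mul]; noncomm_ring
        _ = (1 - B)ᴴ * (P - 1) * (1 - B) := by rw [hshift]
    have e2 : (1 + B)ᴴ * P * (1 + B) - (1 - B)ᴴ * P * (1 - B)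
        = (Bᴴ * P + P * B) + (Bᴴ * P + P * B) := by
      simp only [Matrix.conjTranspose_add, Matrix.conjTranspose_sub,
        Matrix.conjTranspose_one, add_mul, mul_add, sub_mul, mul_sub, one_mul, mul_one]
      abel
    have e3 : (1 - B)ᴴ * (P - 1) * (1 - B) - (1 - B)ᴴ * P * (1 - B)
        = -((1 - B)ᴴ * (1 - B)) := by
      simp only [mul_sub, sub_mul, mul_one, one_mul]
      abel
    rw [← e2, e1, ← e3]
  exact ⟨P, hPh, hpos, hkey⟩

end LyapunovCore

lemma quad_re {n : ℕ} (M : Matrix (Fin n) (Fin n) ℂ) (x : Fin n → ℝ) :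
    x ⬝ᵥ (Matrix.of fun i j => (M i j).re) *ᵥ x
      = (star (fun i => (x i : ℂ)) ⬝ᵥ M *ᵥ (fun i => (x i : ℂ))).re := by
  simp only [dotProduct, Matrix.mulVec, Pi.star_apply, RCLike.star_def, Complex.conj_ofReal,
    Complex.re_sum, Matrix.of_apply]
  refine Finset.sum_congr rfl fun i _ => ?_
  rw [Complex.re_ofReal_mul]
  congr 1
  rw [Complex.re_sum]
  refine Finset.sum_congr rfl fun j _ => ?_
  rw [mul_comm (M i j), Complex.re_ofReal_mul, mul_comm]

lemma rp_left {n : ℕ} (C : Matrix (Fin n) (Fin n) ℝ) (M : Matrix (Fin n) (Fin n) ℂ)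
    (i j : Fin n) :
    ((C.map (algebraMap ℝ ℂ) * M) i j).re = (C * Matrix.of (fun i j => (M i j).re)) i j := by
  simp only [Matrix.mul_apply, Matrix.map_apply, Matrix.of_apply, Complex.coe_algebraMap,
    Complex.re_sum]
  exact Finset.sum_congr rfl fun k _ => by rw [Complex.re_ofReal_mul]

lemma rp_right {n : ℕ} (C : Matrix (Fin n) (Fin n) ℝ) (M : Matrix (Fin n) (Fin n) ℂ)
    (i j : Fin n) :
    ((M * C.map (algebraMap ℝ ℂ)) i j).re = (Matrix.of (fun i j => (M i j).re) * C) i j := by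
  simp only [Matrix.mul_apply, Matrix.map_apply, Matrix.of_apply, Complex.coe_algebraMap,
    Complex.re_sum]
  exact Finset.sum_congr rfl fun k _ => by
    rw [mul_comm (M i k), Complex.re_ofReal_mul, mul_comm]

/-- Every stable real matrix is similar to `J − R` with `J` skew-symmetric and
`R` symmetric positive-definite. -/
theorem stable_similar_to_skew_minus_posdef {n : ℕ} (A : Matrix (Fin n) (Fin n) ℝ)
    (hA : ∀ μ ∈ spectrum ℂ (A.map (algebraMap ℝ ℂ)), μ.re < 0) :
    ∃ T J R : Matrix (Fin n) (Fin n) ℝ,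
      IsUnit T ∧ T * A * T⁻¹ = J - R ∧ Jᵀ = -J ∧ R.PosDef := by
  classical
  obtain ⟨P, hPh, hpos, hkey⟩ := exists_lyapunov (A.map (algebraMap ℝ ℂ)) hA
  set B : Matrix (Fin n) (Fin n) ℂ := A.map (algebraMap ℝ ℂ) with hBdef
  set Pr : Matrix (Fin n) (Fin n) ℝ := Matrix.of (fun i j => (P i j).re) with hPrdef
  have hBH : Bᴴ = (Aᵀ).map (algebraMap ℝ ℂ) := by
    ext i j
    simp [hBdef, Matrix.conjTranspose_apply, Matrix.map_apply, Matrix.transpose_apply,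
      Complex.conj_ofReal]
  have h1B : (1 : Matrix (Fin n) (Fin n) ℂ) - B
      = ((1 : Matrix (Fin n) (Fin n) ℝ) - A).map (algebraMap ℝ ℂ) := by
    ext i j
    simp [hBdef, Matrix.map_apply, Matrix.sub_apply, Matrix.one_apply, apply_ite]
  have hmapT : (((1 : Matrix (Fin n) (Fin n) ℝ) - A).map (algebraMap ℝ ℂ))ᴴ
      = (((1 : Matrix (Fin n) (Fin n) ℝ) - A)ᵀ).map (algebraMap ℝ ℂ) := by
    ext i j
    simp [Matrix.conjTranspose_apply, Matrix.map_apply, Matrix.transpose_apply,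
      Complex.conj_ofReal, Matrix.sub_apply, Matrix.one_apply, eq_comm]
  have hrpmap : ∀ C : Matrix (Fin n) (Fin n) ℝ,
      (Matrix.of (fun i j => ((C.map (algebraMap ℝ ℂ)) i j).re)) = C := by
    intro C; ext i j; simp [Matrix.map_apply]
  -- realified key identity
  have hKeyR : (Aᵀ * Pr + Pr * A) + (Aᵀ * Pr + Pr * A)
      = -(((1 : Matrix (Fin n) (Fin n) ℝ) - A)ᵀ * (1 - A)) := by
    have h := hkey
    rw [hBH, h1B, hmapT] at h
    ext i j
    have hh := congrArg Complex.re (congrFun (congrFun h i) j)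
    simp only [Matrix.add_apply, Matrix.neg_apply, Complex.add_re, Complex.neg_re] at hh
    rw [rp_left, rp_right, rp_left, hrpmap, ← hPrdef] at hh
    simp only [Matrix.add_apply, Matrix.neg_apply]
    exact hh
  -- Pr is symmetric positive definite
  have hPrh : Pr.IsHermitian := by
    show Prᴴ = Pr
    ext i j
    have hconj := congrArg Complex.re (congrFun (congrFun hPh i) j)
    simp only [Matrix.conjTranspose_apply, Complex.conj_re] at hconj
    simp only [Matrix.conjTranspose_apply, hPrdef, Matrix.of_apply, star_trivial]
    exact hconj
  have hPrpos : Pr.PosDef := by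
    refine Matrix.PosDef.of_dotProduct_mulVec_pos hPrh fun x hx => ?_
    have hxc : (fun i => ((x i : ℝ) : ℂ)) ≠ 0 := by
      intro h0
      apply hx
      funext i
      have h1 : ((x i : ℝ) : ℂ) = 0 := by simpa using congrFun h0 i
      simpa using Complex.ofReal_eq_zero.mp h1
    have hp := hpos _ hxc
    rw [star_trivial, hPrdef, quad_re]
    exact hp
  -- invertibility of 1 - A
  have h1Aunit : IsUnit (1 - A).det := by
    have hB1 : IsUnit ((1 : Matrix (Fin n) (Fin n) ℂ) - B) := by
      by_contra hc
      have h1 : (1:ℂ) ∈ spectrum ℂ B := by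
        rw [spectrum.mem_iff, Algebra.algebraMap_eq_smul_one, one_smul]
        exact hc
      have := hA 1 h1
      norm_num at this
    rw [Matrix.isUnit_iff_isUnit_det, h1B] at hB1
    have hdd : ((1 - A).map (algebraMap ℝ ℂ)).det = algebraMap ℝ ℂ ((1 - A).det) :=
      ((algebraMap ℝ ℂ).map_det (1 - A)).symm
    rw [hdd] at hB1
    rw [isUnit_iff_ne_zero] at hB1 ⊢
    exact fun h0 => hB1 (by rw [h0]; simp)
  -- square root
  set Q : Matrix (Fin n) (Fin n) ℝ := CFC.sqrt Pr with hQdef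
  have hQQ : Q * Q = Pr := CFC.sqrt_mul_sqrt_self Pr hPrpos.posSemidef.nonneg
  have hQherm : Q.IsHermitian := (CFC.sqrt_nonneg Pr).posSemidef.1
  have hQt : Qᵀ = Q := by
    have := hQherm
    rwa [Matrix.IsHermitian, Matrix.conjTranspose_eq_transpose_of_trivial] at this
  have hQdetu : IsUnit Q.det := by
    have hd : Q.det * Q.det = Pr.det := by rw [← Matrix.det_mul, hQQ]
    rw [isUnit_iff_ne_zero]
    intro h0
    rw [h0, mul_zero] at hd
    exact (hPrpos.det_pos).ne' hd.symm
  have hQQinv : Q * Q⁻¹ = 1 := Matrix.mul_nonsing_inv _ hQdetu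
  have hQinvQ : Q⁻¹ * Q = 1 := Matrix.nonsing_inv_mul _ hQdetu
  have hQinvT : (Q⁻¹)ᵀ = Q⁻¹ := by rw [Matrix.transpose_nonsing_inv, hQt]
  have hPrQ : Pr * Q⁻¹ = Q := by rw [← hQQ, mul_assoc, hQQinv, mul_one]
  have hQPr : Q⁻¹ * Pr = Q := by rw [← hQQ, ← mul_assoc, hQinvQ, one_mul]
  set M : Matrix (Fin n) (Fin n) ℝ := Q * A * Q⁻¹ with hMdef
  set N : Matrix (Fin n) (Fin n) ℝ := (1 - A) * Q⁻¹ with hNdef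
  have hMt : Mᵀ = Q⁻¹ * Aᵀ * Q := by
    rw [hMdef, Matrix.transpose_mul, Matrix.transpose_mul, hQinvT, hQt, mul_assoc]
  have hNt : Nᵀ = Q⁻¹ * (1 - A)ᵀ := by rw [hNdef, Matrix.transpose_mul, hQinvT]
  have hmid : Q⁻¹ * (((Aᵀ * Pr + Pr * A) + (Aᵀ * Pr + Pr * A)) * Q⁻¹)
      = (Mᵀ + M) + (Mᵀ + M) := by
    rw [hMt, hMdef]
    simp only [add_mul, mul_add]
    rw [mul_assoc Aᵀ Pr Q⁻¹, hPrQ]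
    rw [mul_assoc Pr A Q⁻¹, ← mul_assoc Q⁻¹ Pr (A * Q⁻¹), hQPr]
    simp only [mul_add, mul_assoc]
  have hNN : Q⁻¹ * ((-(((1 : Matrix (Fin n) (Fin n) ℝ) - A)ᵀ * (1 - A))) * Q⁻¹)
      = -(Nᵀ * N) := by
    rw [hNt, hNdef]
    simp only [neg_mul, mul_neg, mul_assoc]
  have h2M : (Mᵀ + M) + (Mᵀ + M) = -(Nᵀ * N) := by
    rw [← hmid, hKeyR, hNN]
  set R : Matrix (Fin n) (Fin n) ℝ := (4⁻¹ : ℝ) • (Nᵀ * N) with hRdef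
  have hRt : Rᵀ = R := by
    rw [hRdef, Matrix.transpose_smul, Matrix.transpose_mul, Matrix.transpose_transpose]
  -- N is invertible
  have hNdetu : IsUnit N.det := by
    rw [hNdef, Matrix.det_mul]
    exact h1Aunit.mul (Matrix.isUnit_nonsing_inv_det Q hQdetu)
  have hNTN : (Nᵀ * N).PosDef := by
    refine Matrix.PosDef.of_dotProduct_mulVec_pos ?_ ?_
    · show (Nᵀ * N)ᴴ = Nᵀ * N
      rw [Matrix.conjTranspose_eq_transpose_of_trivial, Matrix.transpose_mul,
        Matrix.transpose_transpose]
    · intro x hx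
      have hz : N *ᵥ x ≠ 0 := by
        intro h0
        apply hx
        have : N⁻¹ *ᵥ (N *ᵥ x) = x := by
          rw [Matrix.mulVec_mulVec, Matrix.nonsing_inv_mul _ hNdetu, Matrix.one_mulVec]
        rw [h0, Matrix.mulVec_zero] at this
        exact this.symm
      have he : star x ⬝ᵥ (Nᵀ * N) *ᵥ x = (N *ᵥ x) ⬝ᵥ (N *ᵥ x) := by
        rw [star_trivial, ← Matrix.mulVec_mulVec, Matrix.dotProduct_mulVec,
          Matrix.vecMul_transpose]
      rw [he]
      obtain ⟨i, hi⟩ := Function.ne_iff.mp hz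
      refine Finset.sum_pos' (fun i _ => mul_self_nonneg _) ⟨i, Finset.mem_univ i, ?_⟩
      exact mul_self_pos.mpr (by simpa using hi)
  have hRpos : R.PosDef := by
    refine Matrix.PosDef.of_dotProduct_mulVec_pos ?_ (fun x hx => ?_)
    · show Rᴴ = R
      rw [Matrix.conjTranspose_eq_transpose_of_trivial, hRt]
    · rw [hRdef, Matrix.smul_mulVec, dotProduct_smul]
      have := hNTN.dotProduct_mulVec_pos hx
      have h4 : (0:ℝ) < 4⁻¹ := by norm_num
      simpa using mul_pos h4 this
  refine ⟨Q, M + R, R, (Matrix.isUnit_iff_isUnit_det Q).mpr hQdetu, ?_, ?_, hRpos⟩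
  · rw [← hMdef, add_sub_cancel_right]
  · rw [Matrix.transpose_add, hRt]
    have hNNeq : Nᵀ * N = -((Mᵀ + M) + (Mᵀ + M)) := by rw [h2M, neg_neg]
    rw [hRdef, hNNeq]
    module
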